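/- Let T be a linear isometry of (V, d_{w,(P,π)}) and i ∈ [s]. Then there is a unique j ∈ [s] with |⟨i⟩| = |⟨j⟩| and T(V_{⟨i⟩}) ⊆ V_{⟨j⟩}. -/

import Mathlib

attribute [local instance] Classical.propDecidable
set_option linter.unusedSectionVars false
set_option linter.unusedVariables false

noncomputable section

variable {ι F : Type*}

section Defs
variable [Fintype ι] [PartialOrder ι] [Field F] [Fintype F] {k : ι → ℕ}

/-- block support -/
def suppB (u : ∀ i, Fin (k i) → F) : Finset ι :=
  Finset.univ.filter fun i => u i ≠ 0

/-- order ideal generated by the block support -/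
def idealOf (u : ∀ i, Fin (k i) → F) : Finset ι :=
  Finset.univ.filter fun i => ∃ j ∈ suppB u, i ≤ j

/-- maximal elements of the ideal generated by the support -/
def maxOf (u : ∀ i, Fin (k i) → F) : Finset ι :=
  (idealOf u).filter fun i => ∀ j ∈ idealOf u, i ≤ j → i = j

/-- maximal weight of a block -/
def Wblk (w : F → ℕ) (u : ∀ i, Fin (k i) → F) (i : ι) : ℕ :=
  Finset.univ.sup fun j => w (u i j)

/-- maximal value of the weight -/
def Mw (w : F → ℕ) : ℕ := Finset.univ.sup w

/-- minimal value of the weight on nonzero elements -/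
def mw (w : F → ℕ) : ℕ := sInf (w '' {a | a ≠ 0})

/-- the weighted poset block weight -/
def omegaW (w : F → ℕ) (u : ∀ i, Fin (k i) → F) : ℕ :=
  (∑ i ∈ maxOf u, Wblk w u i) + (idealOf u \ maxOf u).card * Mw w

/-- principal ideal generated by `i` -/
def pIdeal (i : ι) : Finset ι := Finset.univ.filter fun j => j ≤ i

end Defs

section Aux
variable [Fintype ι] [PartialOrder ι] [Field F] [Fintype F] {k : ι → ℕ}

lemma mem_suppB {u : ∀ i, Fin (k i) → F} {t : ι} : t ∈ suppB u ↔ u t ≠ 0 := by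
  simp [suppB]

lemma mem_idealOf {u : ∀ i, Fin (k i) → F} {t : ι} :
    t ∈ idealOf u ↔ ∃ b, u b ≠ 0 ∧ t ≤ b := by
  simp [idealOf, mem_suppB, suppB]

lemma suppB_subset_idealOf (u : ∀ i, Fin (k i) → F) : suppB u ⊆ idealOf u := by
  intro t ht
  exact mem_idealOf.mpr ⟨t, mem_suppB.mp ht, le_refl t⟩

lemma idealOf_lower {u : ∀ i, Fin (k i) → F} {s t : ι} (h : s ≤ t) (ht : t ∈ idealOf u) :
    s ∈ idealOf u := by
  obtain ⟨b, hb, htb⟩ := mem_idealOf.mp ht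
  exact mem_idealOf.mpr ⟨b, hb, h.trans htb⟩

lemma mem_pIdeal {t s : ι} : s ∈ pIdeal t ↔ s ≤ t := by simp [pIdeal]

lemma pIdeal_self (t : ι) : t ∈ pIdeal t := mem_pIdeal.mpr le_rfl

lemma pIdeal_mono {s t : ι} (h : s ≤ t) : pIdeal s ⊆ pIdeal t := by
  intro x hx; exact mem_pIdeal.mpr ((mem_pIdeal.mp hx).trans h)

lemma idealOf_subset_pIdeal {u : ∀ i, Fin (k i) → F} {t : ι} (h : suppB u ⊆ pIdeal t) :
    idealOf u ⊆ pIdeal t := by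
  intro s hs
  obtain ⟨b, hb, hsb⟩ := mem_idealOf.mp hs
  exact mem_pIdeal.mpr (hsb.trans (mem_pIdeal.mp (h (mem_suppB.mpr hb))))

lemma maxOf_subset (u : ∀ i, Fin (k i) → F) : maxOf u ⊆ idealOf u :=
  Finset.filter_subset _ _

lemma mem_maxOf {u : ∀ i, Fin (k i) → F} {t : ι} :
    t ∈ maxOf u ↔ t ∈ idealOf u ∧ ∀ j ∈ idealOf u, t ≤ j → t = j := by
  simp [maxOf]

lemma maxOf_suppB {u : ∀ i, Fin (k i) → F} {t : ι} (h : t ∈ maxOf u) : u t ≠ 0 := by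
  obtain ⟨hI, hmax⟩ := mem_maxOf.mp h
  obtain ⟨b, hb, htb⟩ := mem_idealOf.mp hI
  have := hmax b (suppB_subset_idealOf u (mem_suppB.mpr hb)) htb
  subst this; exact hb

variable (w : F → ℕ)

lemma le_Mw (a : F) : w a ≤ Mw w := Finset.le_sup (Finset.mem_univ a)

lemma exists_Mw : ∃ a : F, w a = Mw w := by
  obtain ⟨a, -, ha⟩ := Finset.exists_mem_eq_sup (Finset.univ : Finset F)
    ⟨0, Finset.mem_univ 0⟩ w
  exact ⟨a, ha.symm⟩

lemma mw_le {a : F} (ha : a ≠ 0) : mw w ≤ w a := Nat.sInf_le ⟨a, ha, rfl⟩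

lemma exists_mw : ∃ a : F, a ≠ 0 ∧ w a = mw w := by
  have h : (w '' {a | a ≠ 0}).Nonempty := ⟨w 1, 1, one_ne_zero, rfl⟩
  obtain ⟨a, ha, hwa⟩ := Nat.sInf_mem h
  exact ⟨a, ha, hwa⟩

variable (hw0 : ∀ a : F, w a = 0 ↔ a = 0)
include hw0

lemma one_le_mw : 1 ≤ mw w := by
  obtain ⟨a, ha, hwa⟩ := exists_mw w
  rw [← hwa]
  exact Nat.one_le_iff_ne_zero.mpr (fun h => ha ((hw0 a).mp h))

lemma mw_le_Mw : mw w ≤ Mw w := by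
  obtain ⟨a, ha, hwa⟩ := exists_mw w
  exact hwa ▸ le_Mw w a

lemma one_le_Mw : 1 ≤ Mw w := le_trans (one_le_mw w hw0) (mw_le_Mw w hw0)

omit hw0

lemma Wblk_le_Mw (u : ∀ i, Fin (k i) → F) (t : ι) : Wblk w u t ≤ Mw w :=
  Finset.sup_le fun j _ => le_Mw w _

lemma mw_le_Wblk {u : ∀ i, Fin (k i) → F} {t : ι} (h : u t ≠ 0) : mw w ≤ Wblk w u t := by
  obtain ⟨j, hj⟩ := Function.ne_iff.mp h
  exact le_trans (mw_le w hj) (Finset.le_sup (f := fun j => w (u t j)) (Finset.mem_univ j))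

lemma Wblk_congr {u v : ∀ i, Fin (k i) → F} {t : ι} (h : u t = v t) :
    Wblk w u t = Wblk w v t := by simp [Wblk, h]

include hw0

lemma Wblk_single {u : ∀ i, Fin (k i) → F} {t : ι} {r : Fin (k t)} {x : F}
    (h : u t = Pi.single r x) : Wblk w u t = w x := by
  unfold Wblk
  rw [h]
  apply le_antisymm
  · apply Finset.sup_le
    intro j _
    rcases eq_or_ne j r with rfl | hj
    · simp
    · rw [Pi.single_eq_of_ne hj, (hw0 0).mpr rfl]
      exact Nat.zero_le _
  · simpa using Finset.le_sup (f := fun j => w ((Pi.single r x : (j : Fin (k t)) → F) j)) (Finset.mem_univ r)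

end Aux
section Aux2
variable [Fintype ι] [PartialOrder ι] [Field F] [Fintype F] {k : ι → ℕ}

lemma suppB_zero : suppB (0 : ∀ i, Fin (k i) → F) = ∅ := by
  ext t; simp [mem_suppB]

lemma suppB_eq_empty {u : ∀ i, Fin (k i) → F} (h : suppB u = ∅) : u = 0 := by
  funext t j
  have := Finset.eq_empty_iff_forall_notMem.mp h t
  rw [mem_suppB, not_not] at this
  rw [this]; rfl

lemma suppB_add_subset (u v : ∀ i, Fin (k i) → F) :
    suppB (u + v) ⊆ suppB u ∪ suppB v := by
  intro t ht
  rw [mem_suppB] at ht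
  rw [Finset.mem_union, mem_suppB, mem_suppB]
  by_contra h
  push_neg at h
  exact ht (by rw [Pi.add_apply, h.1, h.2, add_zero])

lemma suppB_neg (u : ∀ i, Fin (k i) → F) : suppB (-u) = suppB u := by
  ext t; simp [mem_suppB]

lemma suppB_sub_subset (u v : ∀ i, Fin (k i) → F) :
    suppB (u - v) ⊆ suppB u ∪ suppB v := by
  rw [sub_eq_add_neg]
  exact (suppB_add_subset u (-v)).trans (by rw [suppB_neg])

lemma suppB_smul_subset (c : F) (u : ∀ i, Fin (k i) → F) :
    suppB (c • u) ⊆ suppB u := by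
  intro t ht
  rw [mem_suppB] at ht ⊢
  intro h
  exact ht (by rw [Pi.smul_apply, h, smul_zero])

lemma suppB_smul {c : F} (hc : c ≠ 0) (u : ∀ i, Fin (k i) → F) :
    suppB (c • u) = suppB u := by
  apply le_antisymm (suppB_smul_subset c u)
  intro t ht
  rw [mem_suppB] at ht ⊢
  intro h
  apply ht
  have : c • u t = 0 := h
  rcases smul_eq_zero.mp this with h' | h'
  · exact absurd h' hc
  · exact h'

lemma suppB_sum_subset {α : Type*} (s : Finset α) (f : α → ∀ i, Fin (k i) → F) :
    suppB (∑ x ∈ s, f x) ⊆ s.biUnion fun x => suppB (f x) := by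
  induction s using Finset.cons_induction with
  | empty => simp [suppB_zero]
  | cons a s ha ih =>
    rw [Finset.sum_cons]
    refine (suppB_add_subset _ _).trans ?_
    rw [Finset.cons_eq_insert, Finset.biUnion_insert]
    exact Finset.union_subset_union (le_refl _) ih

lemma suppB_single_subset (t : ι) (φ : Fin (k t) → F) :
    suppB (Pi.single t φ) ⊆ {t} := by
  intro s hs
  rw [mem_suppB] at hs
  rcases eq_or_ne s t with rfl | h
  · exact Finset.mem_singleton_self s
  · exact absurd (Pi.single_eq_of_ne (M := fun t => Fin (k t) → F) h φ) hs

lemma suppB_single {t : ι} {φ : Fin (k t) → F} (h : φ ≠ 0) :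
    suppB (Pi.single t φ) = {t} := by
  apply le_antisymm (suppB_single_subset t φ)
  intro s hs
  rw [Finset.mem_singleton] at hs
  subst hs
  rw [mem_suppB, Pi.single_eq_same]
  exact h

lemma idealOf_congr {u v : ∀ i, Fin (k i) → F} (h : suppB u = suppB v) :
    idealOf u = idealOf v := by
  unfold idealOf
  rw [h]

variable (w : F → ℕ)

lemma omega_zero : omegaW w (0 : ∀ i, Fin (k i) → F) = 0 := by
  have h1 : idealOf (0 : ∀ i, Fin (k i) → F) = ∅ := by
    ext t
    simp [mem_idealOf]
  have h2 : maxOf (0 : ∀ i, Fin (k i) → F) = ∅ := by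
    rw [maxOf, h1]; rfl
  rw [omegaW, h1, h2]
  simp

lemma omega_le_card (u : ∀ i, Fin (k i) → F) :
    omegaW w u ≤ (idealOf u).card * Mw w := by
  have h1 : ∑ t ∈ maxOf u, Wblk w u t ≤ (maxOf u).card * Mw w := by
    calc ∑ t ∈ maxOf u, Wblk w u t ≤ ∑ _t ∈ maxOf u, Mw w :=
          Finset.sum_le_sum fun t _ => Wblk_le_Mw w u t
      _ = (maxOf u).card * Mw w := by rw [Finset.sum_const, smul_eq_mul]
  have h2 : (idealOf u \ maxOf u).card + (maxOf u).card = (idealOf u).card := by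
    rw [Finset.card_sdiff_add_card, Finset.union_eq_left.mpr (maxOf_subset u)]
  calc omegaW w u ≤ (maxOf u).card * Mw w + (idealOf u \ maxOf u).card * Mw w :=
        Nat.add_le_add_right h1 _
    _ = (idealOf u).card * Mw w := by rw [← Nat.add_mul, Nat.add_comm, h2]

variable (hw0 : ∀ a : F, w a = 0 ↔ a = 0)
include hw0

lemma omega_pos {u : ∀ i, Fin (k i) → F} (h : u ≠ 0) : 1 ≤ omegaW w u := by
  have hne : (idealOf u).Nonempty := by
    have : ∃ t, u t ≠ 0 := Function.ne_iff.mp h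
    obtain ⟨t, ht⟩ := this
    exact ⟨t, suppB_subset_idealOf u (mem_suppB.mpr ht)⟩
  obtain ⟨m, hm, hmax⟩ : ∃ m ∈ idealOf u, ∀ x ∈ idealOf u, ¬ m < x := by
    obtain ⟨m, hm, hmax⟩ := Finset.exists_maximal hne
    exact ⟨m, hm, fun x hx hlt => hlt.not_ge (hmax hx hlt.le)⟩
  have hmmax : m ∈ maxOf u := by
    rw [mem_maxOf]
    refine ⟨hm, fun j hj hle => ?_⟩
    by_contra hne'
    exact hmax j hj (lt_of_le_of_ne hle hne')
  have h1 : mw w ≤ Wblk w u m := mw_le_Wblk w (maxOf_suppB hmmax)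
  calc 1 ≤ mw w := one_le_mw w hw0
    _ ≤ Wblk w u m := h1
    _ ≤ ∑ t ∈ maxOf u, Wblk w u t :=
        Finset.single_le_sum (fun t _ => Nat.zero_le _) hmmax
    _ ≤ omegaW w u := Nat.le_add_right _ _

lemma omega_eq_zero_iff {u : ∀ i, Fin (k i) → F} : omegaW w u = 0 ↔ u = 0 := by
  constructor
  · intro h
    by_contra hu
    have := omega_pos w hw0 hu
    omega
  · rintro rfl; exact omega_zero w

omit hw0

lemma maxOf_of_principal {u : ∀ i, Fin (k i) → F} {t : ι} (h : idealOf u = pIdeal t) :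
    maxOf u = {t} := by
  ext s
  rw [mem_maxOf, h, Finset.mem_singleton]
  constructor
  · rintro ⟨hs, hmax⟩
    exact hmax t (pIdeal_self t) (mem_pIdeal.mp hs)
  · rintro rfl
    exact ⟨pIdeal_self s, fun j hj hle => le_antisymm hle (mem_pIdeal.mp hj)⟩

lemma omega_principal {u : ∀ i, Fin (k i) → F} {t : ι} (h : idealOf u = pIdeal t) :
    omegaW w u = Wblk w u t + ((pIdeal t).erase t).card * Mw w := by
  have hm := maxOf_of_principal h
  rw [omegaW, hm, h, Finset.sum_singleton, Finset.sdiff_singleton_eq_erase]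

lemma idealOf_eq_pIdeal {u : ∀ i, Fin (k i) → F} {t : ι}
    (hsupp : suppB u ⊆ pIdeal t) (ht : u t ≠ 0) : idealOf u = pIdeal t := by
  apply le_antisymm (idealOf_subset_pIdeal hsupp)
  intro s hs
  exact mem_idealOf.mpr ⟨t, ht, mem_pIdeal.mp hs⟩

include hw0

lemma omega_lower (u : ∀ i, Fin (k i) → F) (S : Finset ι)
    (hS : ∀ m ∈ maxOf u ∩ S, Mw w ≤ Wblk w u m) :
    (idealOf u).card * Mw w + (maxOf u \ S).card * mw w ≤
      omegaW w u + (maxOf u \ S).card * Mw w := by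
  set I := idealOf u
  set M := maxOf u
  have hsplit : ∑ x ∈ M ∩ S, Wblk w u x + ∑ x ∈ M \ S, Wblk w u x
      = ∑ x ∈ M, Wblk w u x := Finset.sum_inter_add_sum_sdiff M S _
  have hB : (M ∩ S).card * Mw w ≤ ∑ x ∈ M ∩ S, Wblk w u x := by
    calc (M ∩ S).card * Mw w = ∑ _x ∈ M ∩ S, Mw w := by
          rw [Finset.sum_const, smul_eq_mul]
      _ ≤ ∑ x ∈ M ∩ S, Wblk w u x := Finset.sum_le_sum hS
  have hA : (M \ S).card * mw w ≤ ∑ x ∈ M \ S, Wblk w u x := by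
    calc (M \ S).card * mw w = ∑ _x ∈ M \ S, mw w := by
          rw [Finset.sum_const, smul_eq_mul]
      _ ≤ ∑ x ∈ M \ S, Wblk w u x := Finset.sum_le_sum fun x hx =>
          mw_le_Wblk w (maxOf_suppB (Finset.mem_sdiff.mp hx).1)
  have hc1 : (M ∩ S).card + (M \ S).card = M.card := by
    have := Finset.card_inter_add_card_sdiff M S
    omega
  have hc2 : (I \ M).card + M.card = I.card := by
    rw [Finset.card_sdiff_add_card, Finset.union_eq_left.mpr (maxOf_subset u)]
  have hIcard : I.card * Mw w = (M ∩ S).card * Mw w + (M \ S).card * Mw w + (I \ M).card * Mw w := by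
    rw [← Nat.add_mul, ← Nat.add_mul]
    congr 1
    omega
  have homega : (M ∩ S).card * Mw w + (M \ S).card * mw w + (I \ M).card * Mw w ≤ omegaW w u := by
    rw [omegaW]
    have : (M ∩ S).card * Mw w + (M \ S).card * mw w ≤ ∑ x ∈ M, Wblk w u x := by
      rw [← hsplit]
      exact Nat.add_le_add hB hA
    exact Nat.add_le_add this (le_refl _)
  calc I.card * Mw w + (M \ S).card * mw w
      = ((M ∩ S).card * Mw w + (M \ S).card * mw w + (I \ M).card * Mw w) + (M \ S).card * Mw w := by
        rw [hIcard]; ring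
    _ ≤ omegaW w u + (M \ S).card * Mw w := Nat.add_le_add homega (le_refl _)

end Aux2

section Main
variable [Fintype ι] [PartialOrder ι] [Field F] [Fintype F] {k : ι → ℕ}

/-- auxiliary predicate: `j` works for `i`, plus a witness vector whose image has
block support exactly `{j}`. -/
def GoodPair (T : (∀ i, Fin (k i) → F) →ₗ[F] (∀ i, Fin (k i) → F)) (i j : ι) : Prop :=
  (pIdeal i).card = (pIdeal j).card ∧
  (∀ v : ∀ i, Fin (k i) → F, suppB v ⊆ pIdeal i → suppB (T v) ⊆ pIdeal j) ∧
  ∃ v : ∀ i, Fin (k i) → F, suppB v ⊆ pIdeal i ∧ suppB (T v) = {j}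

theorem master (hk : ∀ i, 0 < k i) (w : F → ℕ)
    (hw0 : ∀ a : F, w a = 0 ↔ a = 0)
    (hwneg : ∀ a : F, w (-a) = w a) :
    ∀ n : ℕ, ∀ T : (∀ i, Fin (k i) → F) →ₗ[F] (∀ i, Fin (k i) → F),
      (∀ u : ∀ i, Fin (k i) → F, omegaW w (T u) = omegaW w u) →
      ∀ i : ι, (pIdeal i).card = n → ∃ j : ι, GoodPair T i j := by
  intro n
  induction n using Nat.strong_induction_on with
  | _ n IH =>
  intro T hT i hn
  -- T is injective, hence bijective
  have hinj : Function.Injective T := by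
    intro a b hab
    have h0 : T (a - b) = 0 := by rw [map_sub, hab, sub_self]
    have h1 := hT (a - b)
    rw [h0, omega_zero] at h1
    have h2 := (omega_eq_zero_iff w hw0).mp h1.symm
    exact sub_eq_zero.mp h2
  have hbij : Function.Bijective T := Finite.injective_iff_bijective.mp hinj
  set e := LinearEquiv.ofBijective T hbij with he
  set T' := e.symm.toLinearMap with hT'def
  have hTT' : ∀ z, T (T' z) = z := fun z => e.apply_symm_apply z
  have hT'T : ∀ v, T' (T v) = v := fun v => e.symm_apply_apply v
  have hT' : ∀ u, omegaW w (T' u) = omegaW w u := by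
    intro u
    have h := hT (T' u)
    rw [hTT'] at h
    exact h.symm
  -- the IH applied to T and T'
  have hex : ∀ t : ι, (pIdeal t).card < n → ∃ j, GoodPair T t j :=
    fun t ht => IH _ ht T hT t rfl
  have hex' : ∀ t : ι, (pIdeal t).card < n → ∃ j, GoodPair T' t j :=
    fun t ht => IH _ ht T' hT' t rfl
  set σ : ι → ι := fun t => if h : (pIdeal t).card < n then (hex t h).choose else t with hσdef
  set τ : ι → ι := fun t => if h : (pIdeal t).card < n then (hex' t h).choose else t with hτdef
  have hσ : ∀ t, (h : (pIdeal t).card < n) → GoodPair T t (σ t) := by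
    intro t h
    simp only [hσdef, dif_pos h]
    exact (hex t h).choose_spec
  have hτ : ∀ t, (h : (pIdeal t).card < n) → GoodPair T' t (τ t) := by
    intro t h
    simp only [hτdef, dif_pos h]
    exact (hex' t h).choose_spec
  have hσcard : ∀ t, (h : (pIdeal t).card < n) → (pIdeal (σ t)).card = (pIdeal t).card :=
    fun t h => ((hσ t h).1).symm
  have hτcard : ∀ t, (h : (pIdeal t).card < n) → (pIdeal (τ t)).card = (pIdeal t).card :=
    fun t h => ((hτ t h).1).symm
  -- compositions are identity
  have hcompgen : ∀ (A B : (∀ i, Fin (k i) → F) →ₗ[F] (∀ i, Fin (k i) → F))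
      (sA sB : ι → ι), (∀ v, B (A v) = v) →
      (∀ t, (h : (pIdeal t).card < n) → GoodPair A t (sA t)) →
      (∀ t, (h : (pIdeal t).card < n) → GoodPair B t (sB t)) →
      (∀ t, (h : (pIdeal t).card < n) → (pIdeal (sA t)).card = (pIdeal t).card) →
      ∀ t, (h : (pIdeal t).card < n) → sB (sA t) = t := by
    intro A B sA sB hBA hA hB hcard t h
    have h1 := hA t h
    have hlt : (pIdeal (sA t)).card < n := by rw [hcard t h]; exact h
    have h2 := hB (sA t) hlt
    have hsub : pIdeal t ⊆ pIdeal (sB (sA t)) := by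
      intro t' ht'
      set v : ∀ i, Fin (k i) → F := Pi.single t' (fun _ => (1:F)) with hvdef
      have hne : (fun _ => (1:F)) ≠ (0 : Fin (k t') → F) := by
        intro hcontra
        have := congrFun hcontra ⟨0, hk t'⟩
        exact one_ne_zero this
      have hv : suppB v = {t'} := suppB_single hne
      have hv1 : suppB v ⊆ pIdeal t := by
        rw [hv, Finset.singleton_subset_iff]; exact ht'
      have h3 := h1.2.1 v hv1
      have h4 := h2.2.1 (A v) h3
      rw [hBA v] at h4
      exact h4 (by rw [hv]; exact Finset.mem_singleton_self t')
    have hcards : (pIdeal (sB (sA t))).card = (pIdeal t).card := by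
      rw [(h2.1).symm, hcard t h]
    have heq : pIdeal t = pIdeal (sB (sA t)) :=
      Finset.eq_of_subset_of_card_le hsub (le_of_eq hcards)
    have hle1 : t ≤ sB (sA t) := mem_pIdeal.mp (heq ▸ pIdeal_self t)
    have hle2 : sB (sA t) ≤ t := mem_pIdeal.mp (heq ▸ pIdeal_self (sB (sA t)))
    exact le_antisymm hle2 hle1
  have hτσ : ∀ t, (h : (pIdeal t).card < n) → τ (σ t) = t :=
    hcompgen T T' σ τ hT'T hσ hτ hσcard
  have hστ : ∀ t, (h : (pIdeal t).card < n) → σ (τ t) = t :=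
    hcompgen T' T τ σ hTT' hτ hσ hτcard
  -- monotonicity of τ
  have hτmono : ∀ s s', (pIdeal s).card < n → (pIdeal s').card < n → s ≤ s' → τ s ≤ τ s' := by
    intro s s' hs hs' hss
    obtain ⟨-, -, v, hv, hTv⟩ := hτ s hs
    have hv' : suppB v ⊆ pIdeal s' := hv.trans (pIdeal_mono hss)
    have h4 := (hτ s' hs').2.1 v hv'
    rw [hTv] at h4
    exact mem_pIdeal.mp (h4 (Finset.mem_singleton_self _))
  -- the lower ideal and its image
  set I₀ := (pIdeal i).erase i with hI₀def
  have hI₀card : I₀.card + 1 = n := by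
    rw [hI₀def, Finset.card_erase_add_one (pIdeal_self i), hn]
  have hI₀sub : ∀ t ∈ I₀, pIdeal t ⊆ I₀ := by
    intro t ht t' ht'
    have ht1 : t ≤ i := mem_pIdeal.mp (Finset.mem_of_mem_erase ht)
    have ht2 : t ≠ i := Finset.ne_of_mem_erase ht
    have ht'1 : t' ≤ t := mem_pIdeal.mp ht'
    refine Finset.mem_erase.mpr ⟨?_, mem_pIdeal.mpr (ht'1.trans ht1)⟩
    intro hcontra
    subst hcontra
    exact ht2 (le_antisymm ht1 ht'1)
  have hI₀lt : ∀ t ∈ I₀, (pIdeal t).card < n := by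
    intro t ht
    have : pIdeal t ⊆ I₀ := hI₀sub t ht
    have := Finset.card_le_card this
    omega
  set J₀ := I₀.biUnion (fun t => pIdeal (σ t)) with hJ₀def
  have hJ₀lt : ∀ s ∈ J₀, (pIdeal s).card < n := by
    intro s hs
    obtain ⟨t, ht, hst⟩ := Finset.mem_biUnion.mp hs
    have h1 : pIdeal s ⊆ pIdeal (σ t) := pIdeal_mono (mem_pIdeal.mp hst)
    have h2 := Finset.card_le_card h1
    have h3 := hσcard t (hI₀lt t ht)
    have h4 := hI₀lt t ht
    omega
  have hJ₀lower : ∀ s s', s ≤ s' → s' ∈ J₀ → s ∈ J₀ := by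
    intro s s' hss hs'
    obtain ⟨t, ht, hst⟩ := Finset.mem_biUnion.mp hs'
    exact Finset.mem_biUnion.mpr ⟨t, ht, mem_pIdeal.mpr (hss.trans (mem_pIdeal.mp hst))⟩
  have hTmapJ : ∀ v : ∀ i, Fin (k i) → F, suppB v ⊆ I₀ → suppB (T v) ⊆ J₀ := by
    intro v hv
    have hdec : T v = ∑ t, T (Pi.single t (v t)) := by
      conv_lhs => rw [← Finset.univ_sum_single v]
      rw [map_sum]
    rw [hdec]
    refine (suppB_sum_subset _ _).trans ?_
    intro s hs
    obtain ⟨t, -, hst⟩ := Finset.mem_biUnion.mp hs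
    rcases eq_or_ne (v t) 0 with hvt | hvt
    · rw [hvt] at hst
      have : (Pi.single (M := fun i => Fin (k i) → F) t 0) = 0 := by
        funext s' j; simp [Pi.single_apply]
      rw [this, map_zero, suppB_zero] at hst
      exact absurd hst (Finset.notMem_empty s)
    · have htI : t ∈ I₀ := hv (mem_suppB.mpr hvt)
      have h1 : suppB (Pi.single t (v t)) ⊆ pIdeal t := by
        rw [suppB_single hvt, Finset.singleton_subset_iff]; exact pIdeal_self t
      have h2 := (hσ t (hI₀lt t htI)).2.1 _ h1
      exact Finset.mem_biUnion.mpr ⟨t, htI, h2 hst⟩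
  have hT'mapI : ∀ z : ∀ i, Fin (k i) → F, suppB z ⊆ J₀ → suppB (T' z) ⊆ I₀ := by
    intro z hz
    have hdec : T' z = ∑ t, T' (Pi.single t (z t)) := by
      conv_lhs => rw [← Finset.univ_sum_single z]
      rw [map_sum]
    rw [hdec]
    refine (suppB_sum_subset _ _).trans ?_
    intro s hs
    obtain ⟨t', -, hst⟩ := Finset.mem_biUnion.mp hs
    rcases eq_or_ne (z t') 0 with hvt | hvt
    · rw [hvt] at hst
      have : (Pi.single (M := fun i => Fin (k i) → F) t' 0) = 0 := by
        funext s' j; simp [Pi.single_apply]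
      rw [this, map_zero, suppB_zero] at hst
      exact absurd hst (Finset.notMem_empty s)
    · have ht'J : t' ∈ J₀ := hz (mem_suppB.mpr hvt)
      obtain ⟨t, htI, ht'σ⟩ := Finset.mem_biUnion.mp ht'J
      have hlt : (pIdeal (σ t)).card < n := by
        rw [hσcard t (hI₀lt t htI)]; exact hI₀lt t htI
      have h1 : suppB (Pi.single t' (z t')) ⊆ pIdeal (σ t) := by
        rw [suppB_single hvt, Finset.singleton_subset_iff]; exact ht'σ
      have h2 := (hτ (σ t) hlt).2.1 _ h1
      rw [hτσ t (hI₀lt t htI)] at h2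
      exact (h2.trans (hI₀sub t htI)) hst
  have hJ₀eq : J₀ = I₀.image σ := by
    ext s
    constructor
    · intro hs
      obtain ⟨t, ht, hst⟩ := Finset.mem_biUnion.mp hs
      have hslt : (pIdeal s).card < n := hJ₀lt s hs
      have hσtlt : (pIdeal (σ t)).card < n := by
        rw [hσcard t (hI₀lt t ht)]; exact hI₀lt t ht
      have hmono := hτmono s (σ t) hslt hσtlt (mem_pIdeal.mp hst)
      rw [hτσ t (hI₀lt t ht)] at hmono
      have hτsI : τ s ∈ I₀ := hI₀sub t ht (mem_pIdeal.mpr hmono)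
      refine Finset.mem_image.mpr ⟨τ s, hτsI, ?_⟩
      exact hστ s hslt
    · intro hs
      obtain ⟨t, ht, rfl⟩ := Finset.mem_image.mp hs
      exact Finset.mem_biUnion.mpr ⟨t, ht, pIdeal_self (σ t)⟩
  have hJ₀card : J₀.card = I₀.card := by
    rw [hJ₀eq]
    apply Finset.card_image_of_injOn
    intro a ha b hb hab
    have h1 := hτσ a (hI₀lt a ha)
    have h2 := hτσ b (hI₀lt b hb)
    rw [← h1, ← h2, hab]
  -- ====== CORE : single entry vectors in block i ======
  have hI₀pi : I₀ ⊆ pIdeal i := Finset.erase_subset i (pIdeal i)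
  have hiI₀ : i ∉ I₀ := Finset.notMem_erase i (pIdeal i)
  obtain ⟨astar, hastar⟩ := exists_Mw w
  obtain ⟨amin, haminne, hamin⟩ := exists_mw w
  have hastarne : astar ≠ 0 := by
    intro h
    rw [h, (hw0 0).mpr rfl] at hastar
    have := one_le_Mw w hw0
    omega
  have hmw1 : 1 ≤ mw w := one_le_mw w hw0
  have hmwMw : mw w ≤ Mw w := mw_le_Mw w hw0
  have hMw1 : 1 ≤ Mw w := one_le_Mw w hw0
  have core : ∀ (r : Fin (k i)) (x : F), x ≠ 0 →
      ∃ (μ : ι) (y' : ∀ t, Fin (k t) → F),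
        suppB y' ⊆ pIdeal i ∧ suppB (T y') = {μ} ∧
        suppB (T (Pi.single i (Pi.single r x))) ⊆ insert μ J₀ ∧
        (pIdeal μ).erase μ = J₀ ∧ μ ∉ J₀ ∧ (pIdeal μ).card = n ∧
        ∃ c : F, c ≠ 0 ∧ Wblk w (c • (T y')) μ = Mw w := by
    intro r x hx
    set y : ∀ t, Fin (k t) → F := Pi.single i (Pi.single r x) with hydef
    have hxr : (Pi.single r x : Fin (k i) → F) ≠ 0 := by
      intro h
      have := congrFun h r
      rw [Pi.single_eq_same] at this
      exact hx this
    have hysuppeq : suppB y = {i} := suppB_single hxr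
    have hysupp : suppB y ⊆ pIdeal i := by
      rw [hysuppeq, Finset.singleton_subset_iff]; exact pIdeal_self i
    set u := T y with hudef
    set z0 : ∀ t, Fin (k t) → F := fun t => if t ∈ J₀ then u t else 0 with hz0def
    have hz0supp : suppB z0 ⊆ J₀ := by
      intro t ht
      rw [mem_suppB] at ht
      by_contra h
      exact ht (by simp only [hz0def, if_neg h])
    set p := T' z0 with hpdef
    have hpsupp : suppB p ⊆ I₀ := hT'mapI z0 hz0supp
    set y' := y - p with hy'def
    have hy'supp : suppB y' ⊆ pIdeal i :=
      (suppB_sub_subset y p).trans (Finset.union_subset hysupp (hpsupp.trans hI₀pi))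
    have hpi : p i = 0 := by
      by_contra h
      exact hiI₀ (hpsupp (mem_suppB.mpr h))
    have hy'i : y' i = Pi.single r x := by
      rw [hy'def]
      show y i - p i = _
      rw [hpi, sub_zero, hydef, Pi.single_eq_same]
    set u' := T y' with hu'def
    have hu'eq : u' = u - z0 := by
      rw [hu'def, hy'def, map_sub, ← hudef]
      congr 1
      rw [hpdef]
      exact hTT' z0
    have hu'J₀ : ∀ s ∈ J₀, u' s = 0 := by
      intro s hs
      rw [hu'eq]
      show u s - z0 s = 0
      simp only [hz0def, if_pos hs, sub_self]
    -- the key omega formula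
    have hkey : ∀ c : F, c ≠ 0 → ∀ z : ∀ t, Fin (k t) → F, suppB z ⊆ J₀ →
        omegaW w (c • u' - z) = w (c * x) + I₀.card * Mw w := by
      intro c hc z hz
      have h1 : c • u' - z = T (c • y' - T' z) := by
        rw [map_sub, map_smul, hTT', hu'def]
      have hT'zsupp : suppB (T' z) ⊆ I₀ := hT'mapI z hz
      have hgsupp : suppB (c • y' - T' z) ⊆ pIdeal i :=
        (suppB_sub_subset _ _).trans (Finset.union_subset
          ((suppB_smul_subset c y').trans hy'supp) (hT'zsupp.trans hI₀pi))
      have hT'zi : (T' z) i = 0 := by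
        by_contra h
        exact hiI₀ (hT'zsupp (mem_suppB.mpr h))
      have hgi : (c • y' - T' z) i = Pi.single r (c * x) := by
        show (c • y') i - (T' z) i = _
        rw [hT'zi, sub_zero]
        show c • y' i = _
        rw [hy'i]
        funext j
        rcases eq_or_ne j r with rfl | hj
        · simp [Pi.single_eq_same, smul_eq_mul]
        · simp [Pi.single_eq_of_ne hj]
      have hgne : (c • y' - T' z) i ≠ 0 := by
        rw [hgi]
        intro h
        have := congrFun h r
        rw [Pi.single_eq_same] at this
        exact (mul_ne_zero hc hx) this
      have hgideal : idealOf (c • y' - T' z) = pIdeal i :=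
        idealOf_eq_pIdeal hgsupp hgne
      rw [h1, hT, omega_principal w hgideal, Wblk_single w hw0 hgi, ← hI₀def]
    -- u' is nonzero
    have hy'ne : y' ≠ 0 := by
      intro h
      rw [h] at hy'i
      exact hxr (by rw [← hy'i]; rfl)
    have hu'ne : u' ≠ 0 := by
      rw [hu'def]
      intro h
      exact hy'ne (hinj (by rw [h, map_zero]))
    have hu'suppne : (suppB u').Nonempty := by
      rcases Finset.eq_empty_or_nonempty (suppB u') with h | h
      · exact absurd (suppB_eq_empty h) hu'ne
      · exact h
    -- the saturated vector on J₀
    set zs : ∀ t, Fin (k t) → F := fun t => if t ∈ J₀ then (fun _ => astar) else 0 with hzsdef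
    have hzssupp : suppB zs ⊆ J₀ := by
      intro t ht
      rw [mem_suppB] at ht
      by_contra h
      exact ht (by simp only [hzsdef, if_neg h])
    set c0 := amin * x⁻¹ with hc0def
    have hc0ne : c0 ≠ 0 := mul_ne_zero haminne (inv_ne_zero hx)
    have hc0x : c0 * x = amin := by
      rw [hc0def, mul_assoc, inv_mul_cancel₀ hx, mul_one]
    set vstar := c0 • u' - zs with hvstardef
    have hvomega : omegaW w vstar = mw w + I₀.card * Mw w := by
      rw [hvstardef, hkey c0 hc0ne zs hzssupp, hc0x, hamin]
    have hvsJ₀ : ∀ s ∈ J₀, vstar s = fun _ => -astar := by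
      intro s hs
      rw [hvstardef]
      show (c0 • u') s - zs s = _
      have h1 : (c0 • u') s = 0 := by
        show c0 • u' s = 0
        rw [hu'J₀ s hs, smul_zero]
      rw [h1]
      simp only [hzsdef, if_pos hs]
      funext j
      simp
    have hvsnJ₀ : ∀ s, s ∉ J₀ → vstar s = c0 • u' s := by
      intro s hs
      rw [hvstardef]
      show (c0 • u') s - zs s = _
      simp only [hzsdef, if_neg hs, sub_zero]
      rfl
    have hvsupp : suppB vstar = suppB u' ∪ J₀ := by
      ext s
      rw [mem_suppB, Finset.mem_union, mem_suppB]
      by_cases hs : s ∈ J₀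
      · simp only [hs, or_true, iff_true]
        rw [hvsJ₀ s hs]
        intro h
        have := congrFun h ⟨0, hk s⟩
        exact hastarne (neg_eq_zero.mp this)
      · simp only [hs, or_false]
        rw [hvsnJ₀ s hs]
        constructor
        · intro h h'
          exact h (by rw [h', smul_zero])
        · intro h h'
          rcases smul_eq_zero.mp h' with h'' | h''
          · exact hc0ne h''
          · exact h h''
    have hvideal : idealOf vstar = idealOf u' ∪ J₀ := by
      ext s
      rw [Finset.mem_union, mem_idealOf]
      constructor
      · rintro ⟨b, hb, hsb⟩
        have hbmem : b ∈ suppB u' ∪ J₀ := hvsupp ▸ mem_suppB.mpr hb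
        rcases Finset.mem_union.mp hbmem with h | h
        · exact Or.inl (mem_idealOf.mpr ⟨b, mem_suppB.mp h, hsb⟩)
        · exact Or.inr (hJ₀lower s b hsb h)
      · rintro (h | h)
        · obtain ⟨b, hb, hsb⟩ := mem_idealOf.mp h
          have hbJ : b ∉ J₀ := fun hbJ => hb (hu'J₀ b hbJ)
          refine ⟨b, ?_, hsb⟩
          have : b ∈ suppB vstar := hvsupp ▸ Finset.mem_union_left _ (mem_suppB.mpr hb)
          exact mem_suppB.mp this
        · refine ⟨s, ?_, le_rfl⟩
          have : s ∈ suppB vstar := hvsupp ▸ Finset.mem_union_right _ h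
          exact mem_suppB.mp this
    set d := (idealOf u' \ J₀).card with hddef
    have hdge : 1 ≤ d := by
      obtain ⟨s, hs⟩ := hu'suppne
      have h1 : s ∈ idealOf u' := suppB_subset_idealOf u' hs
      have h2 : s ∉ J₀ := fun h => (mem_suppB.mp hs) (hu'J₀ s h)
      exact Finset.card_pos.mpr ⟨s, Finset.mem_sdiff.mpr ⟨h1, h2⟩⟩
    have hcardE : (idealOf vstar).card = I₀.card + d := by
      rw [hvideal, ← Finset.card_sdiff_add_card (idealOf u') J₀, hJ₀card, hddef, Nat.add_comm]
    have hWblkJ : ∀ m ∈ maxOf vstar ∩ J₀, Mw w ≤ Wblk w vstar m := by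
      intro m hm
      have hmJ : m ∈ J₀ := (Finset.mem_inter.mp hm).2
      have h1 : vstar m = fun _ => -astar := hvsJ₀ m hmJ
      have h2 : w (vstar m ⟨0, hk m⟩) = Mw w := by rw [h1, hwneg, hastar]
      rw [← h2]
      exact Finset.le_sup (f := fun j => w (vstar m j)) (Finset.mem_univ _)
    have hlow := omega_lower w hw0 vstar J₀ hWblkJ
    set A := maxOf vstar \ J₀ with hAdef
    have hAsub : A ⊆ idealOf u' \ J₀ := by
      intro m hm
      obtain ⟨h1, h2⟩ := Finset.mem_sdiff.mp hm
      have h3 : m ∈ idealOf vstar := maxOf_subset vstar h1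
      rw [hvideal, Finset.mem_union] at h3
      rcases h3 with h3 | h3
      · exact Finset.mem_sdiff.mpr ⟨h3, h2⟩
      · exact absurd h3 h2
    have hAcard : A.card ≤ d := Finset.card_le_card hAsub
    have hineq : (I₀.card + d) * Mw w + A.card * mw w ≤
        mw w + I₀.card * Mw w + A.card * Mw w := by
      rw [← hcardE, ← hvomega]
      calc (idealOf vstar).card * Mw w + A.card * mw w
          ≤ omegaW w vstar + A.card * Mw w := hlow
        _ ≤ omegaW w vstar + A.card * Mw w := le_rfl
    have hd1 : d = 1 := by
      by_contra hne
      have h2le : 2 ≤ d := by omega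
      have hkey2 : d * Mw w + A.card * mw w ≤ mw w + A.card * Mw w := by
        have h := hineq
        rw [Nat.add_mul] at h
        omega
      rcases Nat.exists_eq_add_of_le hAcard with ⟨ee, hee⟩
      rcases Nat.eq_zero_or_pos ee with he0 | hepos
      · have hAd : A.card = d := by omega
        rw [hAd] at hkey2
        have h3 : 2 * mw w ≤ d * mw w := Nat.mul_le_mul_right _ h2le
        omega
      · have hdexp : d * Mw w = A.card * Mw w + ee * Mw w := by rw [hee, Nat.add_mul]
        have h3 : 1 * Mw w ≤ ee * Mw w := Nat.mul_le_mul_right _ hepos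
        rcases Nat.eq_zero_or_pos A.card with ha0 | hapos
        · have hde : d = ee := by omega
          have h5 : 2 * Mw w ≤ ee * Mw w := Nat.mul_le_mul_right _ (by omega : 2 ≤ ee)
          rw [ha0] at hkey2 hdexp
          omega
        · have h5 : 1 * mw w ≤ A.card * mw w := Nat.mul_le_mul_right _ hapos
          omega
    obtain ⟨μ, hμ⟩ := Finset.card_eq_one.mp (hddef ▸ hd1)
    have hsuppsub : suppB u' ⊆ {μ} := by
      rw [← hμ]
      intro s hs
      exact Finset.mem_sdiff.mpr ⟨suppB_subset_idealOf u' hs,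
        fun h => (mem_suppB.mp hs) (hu'J₀ s h)⟩
    have hsuppu' : suppB u' = {μ} := by
      rcases Finset.subset_singleton_iff.mp hsuppsub with h | h
      · exact absurd (suppB_eq_empty h) hu'ne
      · exact h
    have hidealu' : idealOf u' = pIdeal μ := by
      ext s
      rw [mem_idealOf, mem_pIdeal]
      constructor
      · rintro ⟨b, hb, hsb⟩
        have : b ∈ ({μ} : Finset ι) := hsuppu' ▸ mem_suppB.mpr hb
        rw [Finset.mem_singleton] at this
        exact this ▸ hsb
      · intro h
        have hμsupp : μ ∈ suppB u' := hsuppu' ▸ Finset.mem_singleton_self μ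
        exact ⟨μ, mem_suppB.mp hμsupp, h⟩
    have hμJ₀ : μ ∉ J₀ := by
      have : μ ∈ idealOf u' \ J₀ := hμ ▸ Finset.mem_singleton_self μ
      exact (Finset.mem_sdiff.mp this).2
    have heraseμsub : (pIdeal μ).erase μ ⊆ J₀ := by
      intro s hs
      obtain ⟨hsne, hsmem⟩ := Finset.mem_erase.mp hs
      by_contra h
      have : s ∈ idealOf u' \ J₀ := Finset.mem_sdiff.mpr ⟨hidealu' ▸ hsmem, h⟩
      rw [hμ, Finset.mem_singleton] at this
      exact hsne this
    -- boost scalar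
    set c1 := astar * x⁻¹ with hc1def
    have hc1ne : c1 ≠ 0 := mul_ne_zero hastarne (inv_ne_zero hx)
    have hc1x : c1 * x = astar := by
      rw [hc1def, mul_assoc, inv_mul_cancel₀ hx, mul_one]
    have h5 : omegaW w (c1 • u') = Mw w + I₀.card * Mw w := by
      have := hkey c1 hc1ne 0 (by rw [suppB_zero]; exact Finset.empty_subset _)
      rw [sub_zero, hc1x, hastar] at this
      exact this
    have hideal1 : idealOf (c1 • u') = pIdeal μ := by
      rw [idealOf_congr (suppB_smul hc1ne u'), hidealu']
    have h6 := omega_principal w hideal1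
    have herasecard : ((pIdeal μ).erase μ).card ≤ I₀.card := by
      have := Finset.card_le_card heraseμsub
      omega
    have hWle : Wblk w (c1 • u') μ ≤ Mw w := Wblk_le_Mw w _ μ
    have hgecard : I₀.card ≤ ((pIdeal μ).erase μ).card := by
      -- from h5 = h6
      have heq : Wblk w (c1 • u') μ + ((pIdeal μ).erase μ).card * Mw w
          = Mw w + I₀.card * Mw w := by rw [← h6, h5]
      by_contra h
      push_neg at h
      have h7 : ((pIdeal μ).erase μ).card * Mw w + Mw w ≤ I₀.card * Mw w := by
        have : ((pIdeal μ).erase μ).card + 1 ≤ I₀.card := h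
        calc ((pIdeal μ).erase μ).card * Mw w + Mw w
            = (((pIdeal μ).erase μ).card + 1) * Mw w := by rw [Nat.add_mul, Nat.one_mul]
          _ ≤ I₀.card * Mw w := Nat.mul_le_mul_right _ this
      omega
    have heqJ : (pIdeal μ).erase μ = J₀ := by
      apply Finset.eq_of_subset_of_card_le heraseμsub
      omega
    have hWblkc1 : Wblk w (c1 • u') μ = Mw w := by
      have heq : Wblk w (c1 • u') μ + ((pIdeal μ).erase μ).card * Mw w
          = Mw w + I₀.card * Mw w := by rw [← h6, h5]
      rw [heqJ, hJ₀card] at heq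
      omega
    have hcardμ : (pIdeal μ).card = n := by
      have := Finset.card_erase_add_one (pIdeal_self μ)
      rw [heqJ, hJ₀card] at this
      omega
    have hsuppTy : suppB (T y) ⊆ insert μ J₀ := by
      have huadd : u = u' + z0 := by rw [hu'eq, sub_add_cancel]
      show suppB u ⊆ insert μ J₀
      rw [huadd]
      refine (suppB_add_subset u' z0).trans ?_
      rw [hsuppu']
      intro s hs
      rcases Finset.mem_union.mp hs with h | h
      · rw [Finset.mem_singleton] at h
        exact Finset.mem_insert.mpr (Or.inl h)
      · exact Finset.mem_insert.mpr (Or.inr (hz0supp h))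
    refine ⟨μ, y', hy'supp, ?_, hsuppTy, heqJ, hμJ₀, hcardμ, c1, hc1ne, ?_⟩
    · rw [← hu'def]; exact hsuppu'
    · rw [← hu'def]; exact hWblkc1
  -- ====== canonical μ and uniqueness across single entries ======
  obtain ⟨μ, y0', hy0supp, hy0single, hsuppTy0, heraseμ, hμJ₀, hcardμ, c01, hc01ne, hWblk0⟩ :=
    core ⟨0, hk i⟩ 1 one_ne_zero
  have hJ₀μ : J₀ ⊆ pIdeal μ := by
    rw [← heraseμ]
    exact Finset.erase_subset μ (pIdeal μ)
  have hcomp2 : ∀ a b : ι, (pIdeal a).card = n → (pIdeal b).card = n → a ≤ b → a = b := by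
    intro a b ha hb hab
    have heq : pIdeal a = pIdeal b :=
      Finset.eq_of_subset_of_card_le (pIdeal_mono hab) (by omega)
    have h1 : b ≤ a := mem_pIdeal.mp (heq ▸ pIdeal_self b)
    exact le_antisymm hab h1
  have hWblk_zero : ∀ (v : ∀ t, Fin (k t) → F) (t : ι), v t = 0 → Wblk w v t = 0 := by
    intro v t h
    apply Nat.le_antisymm _ (Nat.zero_le _)
    apply Finset.sup_le
    intro j _
    rw [congrFun h j]
    exact le_of_eq ((hw0 0).mpr rfl)
  have hsame : ∀ (r : Fin (k i)) (x : F), x ≠ 0 →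
      suppB (T (Pi.single i (Pi.single r x))) ⊆ pIdeal μ := by
    intro r x hx
    obtain ⟨μ2, y2', hy2supp, hy2single, hsuppTy2, herase2, hμ2J₀, hcard2, c2, hc2ne, hW2⟩ :=
      core r x hx
    have hJ₀μ2 : J₀ ⊆ pIdeal μ2 := by
      rw [← herase2]
      exact Finset.erase_subset μ2 (pIdeal μ2)
    by_cases heq12 : μ2 = μ
    · subst heq12
      refine hsuppTy2.trans ?_
      intro s hs
      rcases Finset.mem_insert.mp hs with h | h
      · exact h ▸ pIdeal_self μ2
      · exact hJ₀μ2 h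
    · exfalso
      set g := c01 • y0' + c2 • y2' with hgdef
      have hgsupp : suppB g ⊆ pIdeal i :=
        (suppB_add_subset _ _).trans (Finset.union_subset
          ((suppB_smul_subset _ _).trans hy0supp) ((suppB_smul_subset _ _).trans hy2supp))
      have hω : omegaW w (T g) ≤ n * Mw w := by
        rw [hT g]
        calc omegaW w g ≤ (idealOf g).card * Mw w := omega_le_card w g
          _ ≤ n * Mw w := by
              apply Nat.mul_le_mul_right
              have := Finset.card_le_card (idealOf_subset_pIdeal hgsupp)
              omega
      have hTg : T g = c01 • (T y0') + c2 • (T y2') := by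
        rw [hgdef, map_add, map_smul, map_smul]
      have hs1 : suppB (c01 • T y0') ⊆ {μ} := by
        refine (suppB_smul_subset _ _).trans ?_
        rw [hy0single]
      have hs2 : suppB (c2 • T y2') ⊆ {μ2} := by
        refine (suppB_smul_subset _ _).trans ?_
        rw [hy2single]
      have hzero1 : (c2 • T y2') μ = 0 := by
        by_contra h
        have : μ ∈ ({μ2} : Finset ι) := hs2 (mem_suppB.mpr h)
        rw [Finset.mem_singleton] at this
        exact heq12 this.symm
      have hzero2 : (c01 • T y0') μ2 = 0 := by
        by_contra h
        have : μ2 ∈ ({μ} : Finset ι) := hs1 (mem_suppB.mpr h)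
        rw [Finset.mem_singleton] at this
        exact heq12 this
      have hval1 : (T g) μ = (c01 • T y0') μ := by
        rw [hTg]
        show (c01 • T y0') μ + (c2 • T y2') μ = _
        rw [hzero1, add_zero]
      have hval2 : (T g) μ2 = (c2 • T y2') μ2 := by
        rw [hTg]
        show (c01 • T y0') μ2 + (c2 • T y2') μ2 = _
        rw [hzero2, zero_add]
      have hmune1 : (c01 • T y0') μ ≠ 0 := by
        intro h0
        have := hWblk_zero _ _ h0
        rw [hWblk0] at this
        omega
      have hmune2 : (c2 • T y2') μ2 ≠ 0 := by
        intro h0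
        have := hWblk_zero _ _ h0
        rw [hW2] at this
        omega
      have hnotle1 : ¬ μ ≤ μ2 := fun h => heq12 ((hcomp2 μ μ2 hcardμ hcard2 h).symm)
      have hnotle2 : ¬ μ2 ≤ μ := fun h => heq12 (hcomp2 μ2 μ hcard2 hcardμ h)
      have hμμ2 : μ ≠ μ2 := fun h => heq12 h.symm
      have hsuppTg : suppB (T g) = {μ, μ2} := by
        apply le_antisymm
        · intro s hs
          have h1 : s ∈ suppB (c01 • T y0') ∪ suppB (c2 • T y2') := by
            rw [hTg] at hs
            exact suppB_add_subset _ _ hs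
          rcases Finset.mem_union.mp h1 with h | h
          · exact Finset.mem_insert.mpr (Or.inl (Finset.mem_singleton.mp (hs1 h)))
          · exact Finset.mem_insert.mpr (Or.inr (hs2 h))
        · intro s hs
          rcases Finset.mem_insert.mp hs with rfl | hs
          · exact mem_suppB.mpr (by rw [hval1]; exact hmune1)
          · rw [Finset.mem_singleton] at hs
            subst hs
            exact mem_suppB.mpr (by rw [hval2]; exact hmune2)
      have hidealTg : idealOf (T g) = pIdeal μ ∪ pIdeal μ2 := by
        ext s
        rw [mem_idealOf, Finset.mem_union, mem_pIdeal, mem_pIdeal]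
        constructor
        · rintro ⟨b, hb, hsb⟩
          have : b ∈ ({μ, μ2} : Finset ι) := hsuppTg ▸ mem_suppB.mpr hb
          rcases Finset.mem_insert.mp this with rfl | h
          · exact Or.inl hsb
          · rw [Finset.mem_singleton] at h
            exact Or.inr (h ▸ hsb)
        · rintro (h | h)
          · refine ⟨μ, ?_, h⟩
            have : μ ∈ suppB (T g) := hsuppTg ▸ Finset.mem_insert_self μ {μ2}
            exact mem_suppB.mp this
          · refine ⟨μ2, ?_, h⟩
            have : μ2 ∈ suppB (T g) := by
              rw [hsuppTg]
              exact Finset.mem_insert.mpr (Or.inr (Finset.mem_singleton_self μ2))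
            exact mem_suppB.mp this
      have hmaxTg : maxOf (T g) = {μ, μ2} := by
        ext s
        rw [mem_maxOf, hidealTg]
        constructor
        · rintro ⟨hs, hmax⟩
          rcases Finset.mem_union.mp hs with h | h
          · have := hmax μ (Finset.mem_union_left _ (pIdeal_self μ)) (mem_pIdeal.mp h)
            exact Finset.mem_insert.mpr (Or.inl this)
          · have := hmax μ2 (Finset.mem_union_right _ (pIdeal_self μ2)) (mem_pIdeal.mp h)
            exact Finset.mem_insert.mpr (Or.inr (Finset.mem_singleton.mpr this))
        · intro hs
          rcases Finset.mem_insert.mp hs with rfl | hs'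
          · refine ⟨Finset.mem_union_left _ (pIdeal_self s), ?_⟩
            intro j hj hsj
            rcases Finset.mem_union.mp hj with h | h
            · exact le_antisymm hsj (mem_pIdeal.mp h)
            · exact absurd (hsj.trans (mem_pIdeal.mp h)) hnotle1
          · rw [Finset.mem_singleton] at hs'
            subst hs'
            refine ⟨Finset.mem_union_right _ (pIdeal_self s), ?_⟩
            intro j hj hsj
            rcases Finset.mem_union.mp hj with h | h
            · exact absurd (hsj.trans (mem_pIdeal.mp h)) hnotle2
            · exact le_antisymm hsj (mem_pIdeal.mp h)
      have hWTg1 : Wblk w (T g) μ = Mw w := by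
        rw [Wblk_congr w hval1]
        exact hWblk0
      have hWTg2 : Wblk w (T g) μ2 = Mw w := by
        rw [Wblk_congr w hval2]
        exact hW2
      set U := pIdeal μ ∪ pIdeal μ2 with hUdef
      have hωeq : omegaW w (T g) = Mw w + Mw w + (U \ {μ, μ2}).card * Mw w := by
        rw [omegaW, hmaxTg, hidealTg, Finset.sum_pair hμμ2, hWTg1, hWTg2]
      have hUcard : n + 1 ≤ U.card := by
        have hsub : insert μ2 (pIdeal μ) ⊆ U := by
          apply Finset.insert_subset
          · exact Finset.mem_union_right _ (pIdeal_self μ2)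
          · exact Finset.subset_union_left
        have hμ2notin : μ2 ∉ pIdeal μ := fun h => hnotle2 (mem_pIdeal.mp h)
        have := Finset.card_le_card hsub
        rw [Finset.card_insert_of_notMem hμ2notin, hcardμ] at this
        exact this
      have hpairsub : ({μ, μ2} : Finset ι) ⊆ U := by
        intro s hs
        rcases Finset.mem_insert.mp hs with rfl | hs
        · exact Finset.mem_union_left _ (pIdeal_self s)
        · rw [Finset.mem_singleton] at hs
          subst hs
          exact Finset.mem_union_right _ (pIdeal_self s)
      have hsd : (U \ {μ, μ2}).card = U.card - 2 := by
        rw [Finset.card_sdiff_of_subset hpairsub, Finset.card_pair hμμ2]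
      have h2U : 2 ≤ U.card := by omega
      have hfinal : omegaW w (T g) = U.card * Mw w := by
        rw [hωeq, hsd]
        have : U.card - 2 + 2 = U.card := by omega
        calc Mw w + Mw w + (U.card - 2) * Mw w = (U.card - 2 + 2) * Mw w := by
              rw [Nat.add_mul]
              omega
          _ = U.card * Mw w := by rw [this]
      have hge : (n + 1) * Mw w ≤ U.card * Mw w := Nat.mul_le_mul_right _ hUcard
      rw [hfinal] at hω
      have : (n + 1) * Mw w ≤ n * Mw w := le_trans hge hω
      rw [Nat.add_mul, Nat.one_mul] at this
      omega
  -- ====== assemble the GoodPair ======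
  refine ⟨μ, ⟨?_, ?_, ⟨y0', hy0supp, hy0single⟩⟩⟩
  · rw [hn, hcardμ]
  · intro v hv
    set vb : ∀ t, Fin (k t) → F := Pi.single i (v i) with hvbdef
    set vl := v - vb with hvldef
    have hvl : suppB vl ⊆ I₀ := by
      intro s hs
      rw [mem_suppB] at hs
      rcases eq_or_ne s i with rfl | hsi
      · exfalso
        apply hs
        show v s - vb s = 0
        rw [hvbdef, Pi.single_eq_same, sub_self]
      · have hvbs : vb s = 0 := by rw [hvbdef]; exact Pi.single_eq_of_ne hsi _
        have hvs : v s ≠ 0 := by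
          intro h
          apply hs
          show v s - vb s = 0
          rw [hvbs, h, sub_zero]
        exact Finset.mem_erase.mpr ⟨hsi, hv (mem_suppB.mpr hvs)⟩
    have h1 : suppB (T vl) ⊆ pIdeal μ := (hTmapJ vl hvl).trans hJ₀μ
    have h2 : suppB (T vb) ⊆ pIdeal μ := by
      have hdec : vb = ∑ r : Fin (k i), Pi.single i (Pi.single r (v i r)) := by
        rw [hvbdef]
        conv_lhs => rw [← Finset.univ_sum_single (v i)]
        exact map_sum (AddMonoidHom.single (fun t => Fin (k t) → F) i) _ _
      rw [hdec, map_sum]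
      refine (suppB_sum_subset _ _).trans ?_
      intro s hs
      obtain ⟨r, -, hsr⟩ := Finset.mem_biUnion.mp hs
      rcases eq_or_ne (v i r) 0 with hvr | hvr
      · rw [hvr] at hsr
        have hz : (Pi.single r (0:F) : Fin (k i) → F) = 0 := Pi.single_zero r
        rw [hz] at hsr
        have hz2 : (Pi.single (M := fun t => Fin (k t) → F) i 0) = 0 := by
          funext s' j; simp [Pi.single_apply]
        rw [hz2, map_zero, suppB_zero] at hsr
        exact absurd hsr (Finset.notMem_empty s)
      · exact hsame r (v i r) hvr hsr
    have hvsum : T v = T vl + T vb := by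
      rw [← map_add]
      congr 1
      rw [hvldef, sub_add_cancel]
    rw [hvsum]
    exact (suppB_add_subset _ _).trans (Finset.union_subset h1 h2)




end Main

/-- For a linear isometry `T` and `i ∈ [s]`, there is a unique `j` with
`|⟨i⟩| = |⟨j⟩|` and `T(V_{⟨i⟩}) ⊆ V_{⟨j⟩}`. -/
theorem stmt10 [Fintype ι] [PartialOrder ι] [Field F] [Fintype F] {k : ι → ℕ}
    (hk : ∀ i, 0 < k i)
    (w : F → ℕ)
    (hw0 : ∀ a : F, w a = 0 ↔ a = 0)
    (hwneg : ∀ a : F, w (-a) = w a)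
    (hwadd : ∀ a b : F, w (a + b) ≤ w a + w b)
    (T : (∀ i, Fin (k i) → F) →ₗ[F] (∀ i, Fin (k i) → F))
    (hT : ∀ u : ∀ i, Fin (k i) → F, omegaW w (T u) = omegaW w u)
    (i : ι) :
    ∃! j : ι, (pIdeal i).card = (pIdeal j).card ∧
      ∀ v : ∀ i, Fin (k i) → F, suppB v ⊆ pIdeal i → suppB (T v) ⊆ pIdeal j := by
  obtain ⟨j, hcard, hmaps, v, hv, hTv⟩ :=
    master hk w hw0 hwneg (pIdeal i).card T hT i rfl
  refine ⟨j, ⟨hcard, hmaps⟩, ?_⟩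
  rintro j'' ⟨hcard'', hmaps''⟩
  have hjj : j ∈ pIdeal j'' := by
    have := hmaps'' v hv
    rw [hTv] at this
    exact this (Finset.mem_singleton_self j)
  have hsub : pIdeal j ⊆ pIdeal j'' := pIdeal_mono (mem_pIdeal.mp hjj)
  have heq : pIdeal j = pIdeal j'' :=
    Finset.eq_of_subset_of_card_le hsub (by omega)
  have h1 : j'' ≤ j := mem_pIdeal.mp (heq ▸ pIdeal_self j'')
  have h2 : j ≤ j'' := mem_pIdeal.mp hjj
  exact le_antisymm h1 h2
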